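/- Suppose the matrix A is invertible (rank two). If C_1 λ_1 / C_3 − (b_0 C_1/C_3 + a_0)(d_0 C_1/C_3 + c_0) < 0, then x_{2n} → 0, x_{2n+1} → ∞, y_{2n} → 0 and y_{2n+1} → ∞ as n → ∞. -/

import Mathlib

open Finset Filter Topology

def pqSeq (A11 A12 A21 A22 r0 : ℝ) : ℕ → ℝ × ℝ
  | 0 => (r0, 1)
  | n+1 => ((pqSeq A11 A12 A21 A22 r0 n).1 * A11 + (pqSeq A11 A12 A21 A22 r0 n).2 * A12,
            (pqSeq A11 A12 A21 A22 r0 n).1 * A21 + (pqSeq A11 A12 A21 A22 r0 n).2 * A22)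

lemma mobius_limit (A11 A12 A21 A22 lam1 lam2 Dv : ℝ)
    (h11 : 0 < A11) (h12 : 0 < A12) (h21 : 0 < A21) (h22 : 0 < A22)
    (hDv : Dv = Real.sqrt ((A11 - A22)^2 + 4*A12*A21))
    (hl1 : lam1 = (A11 + A22 + Dv)/2) (hl2 : lam2 = (A11 + A22 - Dv)/2)
    (s : ℕ → ℝ) (hs0 : 0 < s 0)
    (hrec : ∀ n, s (n+1) = (A11 * s n + A12)/(A21 * s n + A22)) :
    Tendsto s atTop (𝓝 (A12/(lam1 - A11))) := by
  have hDnn : 0 ≤ Dv := by rw [hDv]; exact Real.sqrt_nonneg _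
  have hDsq : Dv^2 = (A11 - A22)^2 + 4*A12*A21 := by
    rw [hDv]; exact Real.sq_sqrt (by nlinarith [sq_nonneg (A11 - A22), mul_pos h12 h21])
  have h1221 : 0 < A12 * A21 := mul_pos h12 h21
  have hsum : lam1 + lam2 = A11 + A22 := by rw [hl1, hl2]; ring
  have hprod : lam1 * lam2 = A11*A22 - A12*A21 := by
    rw [hl1, hl2]; linear_combination (-(1:ℝ)/4) * hDsq
  have hA11lt : A11 < lam1 := by rw [hl1]; nlinarith [hDsq, hDnn]
  have hA22lt : A22 < lam1 := by rw [hl1]; nlinarith [hDsq, hDnn]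
  have hl2A11 : lam2 < A11 := by rw [hl2]; nlinarith [hDsq, hDnn]
  have hl2A22 : lam2 < A22 := by rw [hl2]; nlinarith [hDsq, hDnn]
  have hl1pos : 0 < lam1 := lt_trans h22 hA22lt
  have hl2lt : lam2 < lam1 := by rw [hl1, hl2]; nlinarith [hDsq, hDnn]
  have hl2gt : -lam1 < lam2 := by nlinarith
  have habs : |lam2 / lam1| < 1 := by
    rw [abs_div, abs_of_pos hl1pos, div_lt_one hl1pos, abs_lt]; exact ⟨hl2gt, hl2lt⟩
  have hdiff : lam1 - lam2 = Dv := by rw [hl1, hl2]; ring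
  set r0 := s 0 with hr0
  set ap := (A11 - lam2) * r0 + A12 with hapdef
  set bp := (lam1 - A11) * r0 - A12 with hbpdef
  set aq := A21 * r0 + (A22 - lam2) with haqdef
  set bq := (lam1 - A22) - A21 * r0 with hbqdef
  have happos : 0 < ap := by nlinarith
  have haqpos : 0 < aq := by nlinarith
  have hE1 : A11*ap + A12*aq = lam1*ap := by
    rw [hapdef, haqdef]; linear_combination (-(A11*r0) - A12) * hsum + r0 * hprod
  have hE2 : A21*ap + A22*aq = lam1*aq := by
    rw [hapdef, haqdef]; linear_combination (-(A21*r0) - A22) * hsum + hprod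
  have hE3 : A11*bp + A12*bq = lam2*bp := by
    rw [hbpdef, hbqdef]; linear_combination (A11*r0 + A12) * hsum - r0 * hprod
  have hE4 : A21*bp + A22*bq = lam2*bq := by
    rw [hbpdef, hbqdef]; linear_combination (A21*r0 + A22) * hsum - hprod
  -- linear companion sequences
  set p : ℕ → ℝ := fun n => (pqSeq A11 A12 A21 A22 r0 n).1 with hpdef
  set q : ℕ → ℝ := fun n => (pqSeq A11 A12 A21 A22 r0 n).2 with hqdef
  have hp0 : p 0 = r0 := by simp [hpdef, pqSeq]
  have hq0 : q 0 = 1 := by simp [hqdef, pqSeq]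
  have hpstep : ∀ n, p (n+1) = p n * A11 + q n * A12 := fun n => by simp [hpdef, hqdef, pqSeq]
  have hqstep : ∀ n, q (n+1) = p n * A21 + q n * A22 := fun n => by simp [hpdef, hqdef, pqSeq]
  have hpqpos : ∀ n, 0 < p n ∧ 0 < q n := by
    intro n; induction n with
    | zero => rw [hp0, hq0]; exact ⟨hs0, one_pos⟩
    | succ n ih =>
      rw [hpstep, hqstep]
      have h1 := mul_pos ih.1 h11
      have h2 := mul_pos ih.2 h12
      have h3 := mul_pos ih.1 h21
      have h4 := mul_pos ih.2 h22
      exact ⟨by linarith, by linarith⟩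
  have hspos : ∀ n, 0 < s n := by
    intro n; induction n with
    | zero => exact hs0
    | succ n ih =>
      rw [hrec n]
      have hnum : 0 < A11 * s n + A12 := add_pos (mul_pos h11 ih) h12
      have hden : 0 < A21 * s n + A22 := add_pos (mul_pos h21 ih) h22
      exact div_pos hnum hden
  have hspq : ∀ n, s n * q n = p n := by
    intro n; induction n with
    | zero => rw [hp0, hq0, mul_one]
    | succ n ih =>
      have hqn := (hpqpos n).2
      have hsn := hspos n
      have hden : 0 < A21 * s n + A22 := add_pos (mul_pos h21 hsn) h22
      rw [hrec n, hpstep, hqstep]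
      rw [div_mul_eq_mul_div, div_eq_iff (ne_of_gt hden)]
      linear_combination (A11*A22 - A12*A21) * ih
  -- closed form
  have hclosed : ∀ n, Dv * p n = ap * lam1^n + bp * lam2^n ∧ Dv * q n = aq * lam1^n + bq * lam2^n := by
    intro n; induction n with
    | zero =>
      rw [hp0, hq0]
      constructor
      · simp only [pow_zero, mul_one]; rw [hapdef, hbpdef]; linear_combination r0 * hdiff.symm
      · simp only [pow_zero, mul_one]; rw [haqdef, hbqdef]; linear_combination hdiff.symm
    | succ n ih =>
      constructor
      · rw [hpstep]
        linear_combination A11 * ih.1 + A12 * ih.2 + lam1^n * hE1 + lam2^n * hE3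
      · rw [hqstep]
        linear_combination A21 * ih.1 + A22 * ih.2 + lam1^n * hE2 + lam2^n * hE4
  set u := lam2 / lam1 with hudef
  have hu : Tendsto (fun n => u^n) atTop (𝓝 0) :=
    tendsto_pow_atTop_nhds_zero_of_abs_lt_one habs
  have hl1ne : lam1 ≠ 0 := ne_of_gt hl1pos
  have hun : ∀ n : ℕ, u^n * lam1^n = lam2^n := by
    intro n; rw [hudef, div_pow, div_mul_cancel₀]
    exact pow_ne_zero _ hl1ne
  have hDpos : 0 < Dv := by rw [← hdiff]; linarith
  have hdenpos : ∀ n : ℕ, 0 < aq + bq * u^n := by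
    intro n
    have hqn := (hpqpos n).2
    have h2 := (hclosed n).2
    have hlpow : 0 < lam1^n := pow_pos hl1pos n
    have heq : aq + bq * u^n = Dv * q n / lam1^n := by
      rw [eq_div_iff (ne_of_gt hlpow)]; linear_combination h2.symm + bq * hun n
    rw [heq]; exact div_pos (mul_pos hDpos hqn) hlpow
  have hseq : ∀ n, s n = (ap + bp * u^n)/(aq + bq * u^n) := by
    intro n
    have hqn := (hpqpos n).2
    have h1 := (hclosed n).1
    have h2 := (hclosed n).2
    have hden := hdenpos n
    have hsn : s n = p n / q n := by
      rw [eq_div_iff (ne_of_gt hqn)]; exact hspq n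
    rw [hsn, div_eq_div_iff (ne_of_gt hqn) (ne_of_gt hden)]
    have hlpow : lam1^n ≠ 0 := pow_ne_zero _ hl1ne
    apply mul_left_cancel₀ (mul_ne_zero (ne_of_gt hDpos) hlpow)
    linear_combination (lam1^n*aq + u^n*lam1^n*bq) * h1 - (lam1^n*ap + u^n*lam1^n*bp) * h2
      - ((aq*bp - ap*bq)*lam1^n) * hun n
  have hlim : Tendsto (fun n => (ap + bp * u^n)/(aq + bq * u^n)) atTop (𝓝 (ap/aq)) := by
    have h1 : Tendsto (fun n => ap + bp * u^n) atTop (𝓝 (ap + bp * 0)) :=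
      tendsto_const_nhds.add (hu.const_mul bp)
    have h2 : Tendsto (fun n => aq + bq * u^n) atTop (𝓝 (aq + bq * 0)) :=
      tendsto_const_nhds.add (hu.const_mul bq)
    have := h1.div h2 (by simpa using ne_of_gt haqpos)
    simp only [mul_zero, add_zero] at this
    exact this
  have hfin : ap / aq = A12 / (lam1 - A11) := by
    rw [div_eq_div_iff (ne_of_gt haqpos) (by linarith : lam1 - A11 ≠ 0)]
    rw [hapdef, haqdef]
    linear_combination (A11*r0 + A12) * hsum - r0 * hprod
  rw [← hfin]
  exact hlim.congr (fun n => (hseq n).symm)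

lemma ratio_zero (f g : ℕ → ℝ) (hf : ∀ n, 0 < f n) (hrec : ∀ n, f (n+1) = g n * f n)
    (ρ : ℝ) (hg : Tendsto g atTop (𝓝 ρ)) (hρnn : 0 ≤ ρ) (hρ : ρ < 1) :
    Tendsto f atTop (𝓝 0) := by
  set q' := (ρ + 1)/2 with hq'
  have hq'nn : 0 ≤ q' := by rw [hq']; linarith
  have hq'lt : q' < 1 := by rw [hq']; linarith
  have hev : ∀ᶠ n in atTop, g n < q' := hg.eventually (gt_mem_nhds (by rw [hq']; linarith))
  obtain ⟨N, hN⟩ := eventually_atTop.mp hev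
  have hbound : ∀ k, f (k + N) ≤ f N * q'^k := by
    intro k; induction k with
    | zero => simp
    | succ k ih =>
      have h1 : f (k + 1 + N) = g (k + N) * f (k + N) := by
        have : k + 1 + N = (k + N) + 1 := by omega
        rw [this, hrec]
      rw [h1, pow_succ]
      have hg1 : g (k + N) ≤ q' := le_of_lt (hN _ (by omega))
      have hg0 : 0 < g (k + N) := by
        have := hrec (k + N)
        have hfp := hf (k + N + 1)
        have hfp2 := hf (k + N)
        nlinarith
      nlinarith [hf (k + N), mul_pos (hf N) (pow_pos (lt_of_lt_of_le hg0 hg1) k)]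
  have hzero : Tendsto (fun k => f N * q'^k) atTop (𝓝 0) := by
    have := (tendsto_pow_atTop_nhds_zero_of_lt_one hq'nn hq'lt).const_mul (f N)
    simpa using this
  have hshift : Tendsto (fun k => f (k + N)) atTop (𝓝 0) :=
    squeeze_zero (fun k => (hf _).le) hbound hzero
  exact (tendsto_add_atTop_iff_nat N).mp hshift

lemma arg_pos (s X Y : ℝ) (hX : 0 < X) (hY : 0 < Y) : 0 < s^2 + 4*X*Y := by
  nlinarith [sq_nonneg s, mul_pos hX hY]

lemma eig_lt (A11 A22 Dv X Y : ℝ) (hX : 0 < X) (hY : 0 < Y) (hDnn : 0 ≤ Dv)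
    (hDsq : Dv^2 = (A11-A22)^2 + 4*X*Y) : A11 < (A11+A22+Dv)/2 := by
  nlinarith [mul_pos hX hY]

theorem stmt_17
    (x y a b c d : ℕ → ℝ)
    (hx0 : 0 < x 0) (hy0 : 0 < y 0)
    (hapos : ∀ n, 0 < a n) (hbpos : ∀ n, 0 < b n)
    (hcpos : ∀ n, 0 < c n) (hdpos : ∀ n, 0 < d n)
    (haper : ∀ n, a (n + 2) = a n) (hbper : ∀ n, b (n + 2) = b n)
    (hcper : ∀ n, c (n + 2) = c n) (hdper : ∀ n, d (n + 2) = d n)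
    (hxrec : ∀ n, x (n + 1) = a n / x n + b n / y n)
    (hyrec : ∀ n, y (n + 1) = c n / x n + d n / y n)
    (A : Matrix (Fin 2) (Fin 2) ℝ)
    (hAdef : A = !![a 1 * d 0 + b 0 * b 1, a 0 * b 1 + a 1 * c 0;
                    b 0 * d 1 + c 1 * d 0, a 0 * d 1 + c 0 * c 1])
    (hA : IsUnit A)
    (D lam1 lam2 : ℝ)
    (hD : D = Real.sqrt ((a 1 * d 0 + b 0 * b 1 - a 0 * d 1 - c 0 * c 1) ^ 2 +
      4 * (a 0 * b 1 + a 1 * c 0) * (b 0 * d 1 + c 1 * d 0)))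
    (hlam1 : lam1 = (a 1 * d 0 + b 0 * b 1 + a 0 * d 1 + c 0 * c 1 + D) / 2)
    (hlam2 : lam2 = (a 1 * d 0 + b 0 * b 1 + a 0 * d 1 + c 0 * c 1 - D) / 2)
    (C1 C3 : ℝ)
    (hC1 : C1 = (a 0 * b 1 + a 1 * c 0) / (lam1 - lam2) *
      ((b 0 * d 1 + c 1 * d 0) / (lam1 - (a 1 * d 0 + b 0 * b 1)) * x 0 + y 0))
    (hC3 : C3 = ((b 0 * d 1 + c 1 * d 0) * x 0 + (lam1 - (a 1 * d 0 + b 0 * b 1)) * y 0) /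
      (lam1 - lam2))
    (hlt : C1 * lam1 / C3 - (b 0 * (C1 / C3) + a 0) * (d 0 * (C1 / C3) + c 0) < 0)
    : Tendsto (fun n => x (2 * n)) atTop (nhds 0) ∧
      Tendsto (fun n => x (2 * n + 1)) atTop atTop ∧
      Tendsto (fun n => y (2 * n)) atTop (nhds 0) ∧
      Tendsto (fun n => y (2 * n + 1)) atTop atTop := by
  -- positivity
  have hxy : ∀ n, 0 < x n ∧ 0 < y n := by
    intro n; induction n with
    | zero => exact ⟨hx0, hy0⟩
    | succ n ih =>
      rw [hxrec, hyrec]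
      exact ⟨add_pos (div_pos (hapos n) ih.1) (div_pos (hbpos n) ih.2),
             add_pos (div_pos (hcpos n) ih.1) (div_pos (hdpos n) ih.2)⟩
  have hxpos : ∀ n, 0 < x n := fun n => (hxy n).1
  have hypos : ∀ n, 0 < y n := fun n => (hxy n).2
  set r : ℕ → ℝ := fun n => x n / y n with hrdef
  have hrpos : ∀ n, 0 < r n := fun n => div_pos (hxpos n) (hypos n)
  have hr : ∀ n, r (n+1) = (b n * r n + a n) / (d n * r n + c n) := by
    intro n
    have hx := hxpos n; have hy := hypos n
    have hyn1' : 0 < y (n+1) := hypos (n+1)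
    have hden2 : 0 < d n * r n + c n :=
      add_pos (mul_pos (hdpos n) (hrpos n)) (hcpos n)
    show x (n+1) / y (n+1) = _
    rw [div_eq_div_iff (ne_of_gt hyn1') (ne_of_gt hden2), hxrec, hyrec]
    show (a n / x n + b n / y n) * (d n * (x n / y n) + c n) =
      (b n * (x n / y n) + a n) * (c n / x n + d n / y n)
    field_simp
    ring
  -- periodicity at even/odd indices
  have hpar : ∀ (f : ℕ → ℝ), (∀ n, f (n+2) = f n) → ∀ n, f (2*n) = f 0 ∧ f (2*n+1) = f 1 := by
    intro f hf n; induction n with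
    | zero => exact ⟨rfl, rfl⟩
    | succ n ih =>
      have h2 : 2*(n+1) = (2*n) + 2 := by ring
      have h3 : 2*(n+1)+1 = (2*n+1) + 2 := by ring
      rw [h3, h2, hf, hf]; exact ih
  have ha2 := hpar a haper; have hb2 := hpar b hbper
  have hc2 := hpar c hcper; have hd2 := hpar d hdper
  -- odd-step formula
  have hodd : ∀ n, r (2*n+1) = (b 0 * r (2*n) + a 0)/(d 0 * r (2*n) + c 0) := by
    intro n
    rw [hr (2*n), (ha2 n).1, (hb2 n).1, (hc2 n).1, (hd2 n).1]
  -- composed even-step formula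
  have hcomp : ∀ n, r (2*n+2) =
      ((a 1 * d 0 + b 0 * b 1) * r (2*n) + (a 0 * b 1 + a 1 * c 0)) /
      ((b 0 * d 1 + c 1 * d 0) * r (2*n) + (a 0 * d 1 + c 0 * c 1)) := by
    intro n
    have h1 : r (2*n+2) = (b 1 * r (2*n+1) + a 1)/(d 1 * r (2*n+1) + c 1) := by
      rw [hr (2*n+1), (ha2 n).2, (hb2 n).2, (hc2 n).2, (hd2 n).2]
    rw [h1, hodd n]
    have hs := hrpos (2*n)
    have hden0 : 0 < d 0 * r (2*n) + c 0 :=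
      add_pos (mul_pos (hdpos 0) hs) (hcpos 0)
    have hden1 : 0 < d 1 * ((b 0 * r (2*n) + a 0)/(d 0 * r (2*n) + c 0)) + c 1 := by
      have : 0 < (b 0 * r (2*n) + a 0)/(d 0 * r (2*n) + c 0) :=
        div_pos (add_pos (mul_pos (hbpos 0) hs) (hapos 0)) hden0
      have := mul_pos (hdpos 1) this
      linarith [hcpos 1]
    have hden2 : 0 < (b 0 * d 1 + c 1 * d 0) * r (2*n) + (a 0 * d 1 + c 0 * c 1) :=
      add_pos (mul_pos (add_pos (mul_pos (hbpos 0) (hdpos 1)) (mul_pos (hcpos 1) (hdpos 0))) hs)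
        (add_pos (mul_pos (hapos 0) (hdpos 1)) (mul_pos (hcpos 0) (hcpos 1)))
    rw [div_eq_div_iff (ne_of_gt hden1) (ne_of_gt hden2)]
    have key3 := div_mul_cancel₀ (b 0 * r (2*n) + a 0) (ne_of_gt hden0)
    linear_combination (b 1 * c 1 - a 1 * d 1) * key3
  -- apply the Möbius limit lemma to the even ratio subsequence
  have h11 : (0:ℝ) < a 1 * d 0 + b 0 * b 1 :=
    add_pos (mul_pos (hapos 1) (hdpos 0)) (mul_pos (hbpos 0) (hbpos 1))
  have h12 : (0:ℝ) < a 0 * b 1 + a 1 * c 0 :=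
    add_pos (mul_pos (hapos 0) (hbpos 1)) (mul_pos (hapos 1) (hcpos 0))
  have h21 : (0:ℝ) < b 0 * d 1 + c 1 * d 0 :=
    add_pos (mul_pos (hbpos 0) (hdpos 1)) (mul_pos (hcpos 1) (hdpos 0))
  have h22 : (0:ℝ) < a 0 * d 1 + c 0 * c 1 :=
    add_pos (mul_pos (hapos 0) (hdpos 1)) (mul_pos (hcpos 0) (hcpos 1))
  have hD' : D = Real.sqrt (((a 1 * d 0 + b 0 * b 1) - (a 0 * d 1 + c 0 * c 1))^2
      + 4*(a 0 * b 1 + a 1 * c 0)*(b 0 * d 1 + c 1 * d 0)) := by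
    rw [hD]; congr 1; ring
  have hlam1' : lam1 = ((a 1 * d 0 + b 0 * b 1) + (a 0 * d 1 + c 0 * c 1) + D)/2 := by
    rw [hlam1]; ring
  have hlam2' : lam2 = ((a 1 * d 0 + b 0 * b 1) + (a 0 * d 1 + c 0 * c 1) - D)/2 := by
    rw [hlam2]; ring
  have hsrec : ∀ n, (fun n => r (2*n)) (n+1) =
      ((a 1 * d 0 + b 0 * b 1) * r (2*n) + (a 0 * b 1 + a 1 * c 0)) /
      ((b 0 * d 1 + c 1 * d 0) * r (2*n) + (a 0 * d 1 + c 0 * c 1)) := by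
    intro n
    show r (2*(n+1)) = _
    rw [show 2*(n+1) = 2*n+2 from by ring]
    exact hcomp n
  have htlim : Tendsto (fun n => r (2*n)) atTop
      (𝓝 ((a 0 * b 1 + a 1 * c 0)/(lam1 - (a 1 * d 0 + b 0 * b 1)))) :=
    mobius_limit _ _ _ _ lam1 lam2 D h11 h12 h21 h22 hD' hlam1' hlam2'
      (fun n => r (2*n)) (by simpa using hrpos 0) hsrec
  set t := (a 0 * b 1 + a 1 * c 0)/(lam1 - (a 1 * d 0 + b 0 * b 1)) with htdef
  -- eigenvalue facts
  have hDnn : 0 ≤ D := hD ▸ Real.sqrt_nonneg _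
  have hDsq : D^2 = ((a 1 * d 0 + b 0 * b 1) - (a 0 * d 1 + c 0 * c 1))^2
      + 4*(a 0 * b 1 + a 1 * c 0)*(b 0 * d 1 + c 1 * d 0) := by
    rw [hD']
    exact Real.sq_sqrt (arg_pos _ _ _ h12 h21).le
  have hA11lt : a 1 * d 0 + b 0 * b 1 < lam1 := by
    rw [hlam1']; exact eig_lt _ _ _ _ _ h12 h21 hDnn hDsq
  have hl1A11 : 0 < lam1 - (a 1 * d 0 + b 0 * b 1) := by linarith
  have htpos : 0 < t := div_pos h12 hl1A11
  have ht1 : lam1 * t = (a 1 * d 0 + b 0 * b 1) * t + (a 0 * b 1 + a 1 * c 0) := by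
    rw [htdef]; linear_combination div_mul_cancel₀ (a 0 * b 1 + a 1 * c 0) (ne_of_gt hl1A11)
  -- identify C1/C3 with t
  have hdlam : lam1 - lam2 = D := by rw [hlam1, hlam2]; ring
  have hDpos : 0 < D := by
    rw [hD']
    exact Real.sqrt_pos.mpr (arg_pos _ _ _ h12 h21)
  have hC3pos : 0 < C3 := by
    rw [hC3, hdlam]
    exact div_pos (add_pos (mul_pos h21 hx0) (mul_pos hl1A11 hy0)) hDpos
  have hCt : C1 = t * C3 := by
    rw [hC1, hC3, htdef, hdlam]
    linear_combination (-(y 0) / D) * div_mul_cancel₀ (a 0 * b 1 + a 1 * c 0) (ne_of_gt hl1A11)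
  have hCC : C1 / C3 = t := by rw [hCt]; field_simp
  have hlt' : t * lam1 < (b 0 * t + a 0)*(d 0 * t + c 0) := by
    have e1 : C1 * lam1 / C3 = t * lam1 := by
      rw [hCt]; field_simp [ne_of_gt hC3pos]
    rw [e1, hCC] at hlt
    linarith
  -- limit of odd ratios
  set t2 := (b 0 * t + a 0)/(d 0 * t + c 0) with ht2def
  have hdt2 : 0 < d 0 * t + c 0 := add_pos (mul_pos (hdpos 0) htpos) (hcpos 0)
  have hbt2 : 0 < b 0 * t + a 0 := add_pos (mul_pos (hbpos 0) htpos) (hapos 0)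
  have ht2pos : 0 < t2 := div_pos hbt2 hdt2
  have hoddlim : Tendsto (fun n => r (2*n+1)) atTop (𝓝 t2) := by
    have hnum : Tendsto (fun n => b 0 * r (2*n) + a 0) atTop (𝓝 (b 0 * t + a 0)) :=
      (htlim.const_mul (b 0)).add tendsto_const_nhds
    have hden : Tendsto (fun n => d 0 * r (2*n) + c 0) atTop (𝓝 (d 0 * t + c 0)) :=
      (htlim.const_mul (d 0)).add tendsto_const_nhds
    exact (hnum.div hden (ne_of_gt hdt2)).congr fun n => (hodd n).symm
  -- product identities
  have hxx : ∀ n, x (n+1) * x n = a n + b n * r n := by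
    intro n; rw [hxrec]
    have hx := hxpos n; have hy := hypos n
    show (a n / x n + b n / y n) * x n = a n + b n * (x n / y n)
    field_simp
  have hyy : ∀ n, y (n+1) * x n = c n + d n * r n := by
    intro n; rw [hyrec]
    have hx := hxpos n; have hy := hypos n
    show (c n / x n + d n / y n) * x n = c n + d n * (x n / y n)
    field_simp
  have he1 : ∀ n, x (2*n+1) * x (2*n) = a 0 + b 0 * r (2*n) := by
    intro n; rw [hxx (2*n), (ha2 n).1, (hb2 n).1]
  have he2 : ∀ n, x (2*n+2) * x (2*n+1) = a 1 + b 1 * r (2*n+1) := by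
    intro n
    have h := hxx (2*n+1)
    rw [(ha2 n).2, (hb2 n).2] at h
    exact h
  have hnumpos : ∀ n, 0 < a 0 + b 0 * r (2*n) :=
    fun n => add_pos (hapos 0) (mul_pos (hbpos 0) (hrpos _))
  have hgrec : ∀ n, x (2*(n+1)) =
      ((a 1 + b 1 * r (2*n+1))/(a 0 + b 0 * r (2*n))) * x (2*n) := by
    intro n
    rw [show 2*(n+1) = 2*n+2 from by ring, div_mul_eq_mul_div,
      eq_div_iff (ne_of_gt (hnumpos n))]
    linear_combination x (2*n) * he2 n - x (2*n+2) * he1 n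
  have habt : 0 < a 0 + b 0 * t := add_pos (hapos 0) (mul_pos (hbpos 0) htpos)
  have hgtend : Tendsto (fun n => (a 1 + b 1 * r (2*n+1))/(a 0 + b 0 * r (2*n))) atTop
      (𝓝 ((a 1 + b 1 * t2)/(a 0 + b 0 * t))) := by
    have hnum : Tendsto (fun n => a 1 + b 1 * r (2*n+1)) atTop (𝓝 (a 1 + b 1 * t2)) :=
      tendsto_const_nhds.add (hoddlim.const_mul (b 1))
    have hden : Tendsto (fun n => a 0 + b 0 * r (2*n)) atTop (𝓝 (a 0 + b 0 * t)) :=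
      tendsto_const_nhds.add (htlim.const_mul (b 0))
    exact hnum.div hden (ne_of_gt habt)
  have hkey : a 1 + b 1 * t2 < a 0 + b 0 * t := by
    have h5 : (a 1 + b 1 * t2) * (d 0 * t + c 0) = lam1 * t := by
      rw [ht2def]
      linear_combination b 1 * div_mul_cancel₀ (b 0 * t + a 0) (ne_of_gt hdt2) + ht1.symm
    have h6 : (a 1 + b 1 * t2) * (d 0 * t + c 0) < (a 0 + b 0 * t) * (d 0 * t + c 0) := by
      rw [h5]; linarith [hlt']
    exact (mul_lt_mul_iff_of_pos_right hdt2).mp h6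
  have hρnn : (0:ℝ) ≤ (a 1 + b 1 * t2)/(a 0 + b 0 * t) :=
    le_of_lt (div_pos (add_pos (hapos 1) (mul_pos (hbpos 1) ht2pos)) habt)
  have hρlt : (a 1 + b 1 * t2)/(a 0 + b 0 * t) < 1 := (div_lt_one habt).mpr hkey
  have hx2 : Tendsto (fun n => x (2*n)) atTop (𝓝 0) :=
    ratio_zero (fun n => x (2*n)) (fun n => (a 1 + b 1 * r (2*n+1))/(a 0 + b 0 * r (2*n)))
      (fun n => hxpos _) hgrec _ hgtend hρnn hρlt
  -- odd x tends to infinity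
  have hxoddeq : ∀ n, x (2*n+1) = (a 0 + b 0 * r (2*n)) * (x (2*n))⁻¹ := by
    intro n
    rw [eq_mul_inv_iff_mul_eq₀ (ne_of_gt (hxpos (2*n)))]
    exact he1 n
  have hx2in : Tendsto (fun n => x (2*n)) atTop (𝓝[>] 0) :=
    tendsto_nhdsWithin_of_tendsto_nhds_of_eventually_within _ hx2
      (Eventually.of_forall fun n => hxpos _)
  have hinv : Tendsto (fun n => (x (2*n))⁻¹) atTop atTop :=
    tendsto_inv_nhdsGT_zero.comp hx2in
  have hnumt : Tendsto (fun n => a 0 + b 0 * r (2*n)) atTop (𝓝 (a 0 + b 0 * t)) :=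
    tendsto_const_nhds.add (htlim.const_mul _)
  have hxodd : Tendsto (fun n => x (2*n+1)) atTop atTop :=
    (Tendsto.pos_mul_atTop habt hnumt hinv).congr fun n => (hxoddeq n).symm
  -- odd y tends to infinity
  have hyoddeq : ∀ n, y (2*n+1) = (c 0 + d 0 * r (2*n)) * (x (2*n))⁻¹ := by
    intro n
    rw [eq_mul_inv_iff_mul_eq₀ (ne_of_gt (hxpos (2*n))), hyy (2*n), (hc2 n).1, (hd2 n).1]
  have hcd : 0 < c 0 + d 0 * t := add_pos (hcpos 0) (mul_pos (hdpos 0) htpos)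
  have hnum3 : Tendsto (fun n => c 0 + d 0 * r (2*n)) atTop (𝓝 (c 0 + d 0 * t)) :=
    tendsto_const_nhds.add (htlim.const_mul _)
  have hyodd : Tendsto (fun n => y (2*n+1)) atTop atTop :=
    (Tendsto.pos_mul_atTop hcd hnum3 hinv).congr fun n => (hyoddeq n).symm
  -- even y tends to zero
  have hyevee : ∀ n, y (2*(n+1)) = (c 1 + d 1 * r (2*n+1)) * (x (2*n+1))⁻¹ := by
    intro n
    rw [show 2*(n+1) = 2*n+1+1 from by ring,
      eq_mul_inv_iff_mul_eq₀ (ne_of_gt (hxpos (2*n+1))), hyy (2*n+1), (hc2 n).2, (hd2 n).2]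
  have hinvodd : Tendsto (fun n => (x (2*n+1))⁻¹) atTop (𝓝 0) :=
    tendsto_inv_atTop_zero.comp hxodd
  have hnum2 : Tendsto (fun n => c 1 + d 1 * r (2*n+1)) atTop (𝓝 (c 1 + d 1 * t2)) :=
    tendsto_const_nhds.add (hoddlim.const_mul _)
  have hyshift : Tendsto (fun n => y (2*(n+1))) atTop (𝓝 0) := by
    have h := hnum2.mul hinvodd
    rw [mul_zero] at h
    exact h.congr fun n => (hyevee n).symm
  have hyeven : Tendsto (fun n => y (2*n)) atTop (𝓝 0) :=
    (tendsto_add_atTop_iff_nat 1).mp hyshift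
  exact ⟨hx2, hxodd, hyeven, hyodd⟩
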